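/- In the two-sided replicating character string model, the sequence ((Z_k, X̄_k), k ∈ ℤ) is strictly stationary under P, where X̄ is the sequence obtained by placing the values of the input sequence X at the positions where Z ∈ {M,D} and the value 0 elsewhere. -/

import Mathlib

open MeasureTheory ProbabilityTheory Filter Set

/-- The absolute regularity (β-mixing) coefficient between two sub-σ-fields. -/
noncomputable def betaMix {Ω : Type*} {mΩ : MeasurableSpace Ω} (P : Measure Ω)
    (𝓐 𝓑 : MeasurableSpace Ω) : ℝ :=
  sSup { x : ℝ | ∃ (I J : ℕ) (f : Fin I → Set Ω) (g : Fin J → Set Ω),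
    (∀ i, MeasurableSet[𝓐] (f i)) ∧ (∀ j, MeasurableSet[𝓑] (g j)) ∧
    Pairwise (Function.onFun Disjoint f) ∧ (⋃ i, f i) = Set.univ ∧
    Pairwise (Function.onFun Disjoint g) ∧ (⋃ j, g j) = Set.univ ∧
    x = (1/2) * ∑ i, ∑ j,
      |(P (f i ∩ g j)).toReal - (P (f i)).toReal * (P (g j)).toReal| }

/-- The strong mixing (α) coefficient between two sub-σ-fields. -/
noncomputable def alphaMix {Ω : Type*} {mΩ : MeasurableSpace Ω} (P : Measure Ω)
    (𝓐 𝓑 : MeasurableSpace Ω) : ℝ :=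
  sSup { x : ℝ | ∃ (A B : Set Ω), MeasurableSet[𝓐] A ∧ MeasurableSet[𝓑] B ∧
    x = |(P (A ∩ B)).toReal - (P A).toReal * (P B).toReal| }

/-- β mixing coefficient of a two-sided sequence with gap `n`. -/
noncomputable def betaSeq {Ω E : Type*} {mΩ : MeasurableSpace Ω} [MeasurableSpace E]
    (X : ℤ → Ω → E) (n : ℕ) (P : Measure Ω) : ℝ :=
  betaMix P (⨆ k : {k : ℤ // k ≤ 0}, MeasurableSpace.comap (X k) inferInstance)
            (⨆ k : {k : ℤ // (n : ℤ) ≤ k}, MeasurableSpace.comap (X k) inferInstance)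

/-- α mixing coefficient of a two-sided sequence with gap `n`. -/
noncomputable def alphaSeq {Ω E : Type*} {mΩ : MeasurableSpace Ω} [MeasurableSpace E]
    (X : ℤ → Ω → E) (n : ℕ) (P : Measure Ω) : ℝ :=
  alphaMix P (⨆ k : {k : ℤ // k ≤ 0}, MeasurableSpace.comap (X k) inferInstance)
             (⨆ k : {k : ℤ // (n : ℤ) ≤ k}, MeasurableSpace.comap (X k) inferInstance)

/-- Strict stationarity of a two-sided sequence. -/
def IsStationarySeq {Ω E : Type*} {mΩ : MeasurableSpace Ω} [MeasurableSpace E]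
    (P : Measure Ω) (X : ℤ → Ω → E) : Prop :=
  ∀ j : ℤ, P.map (fun ω => fun k : ℤ => X (k + j) ω) = P.map (fun ω => fun k : ℤ => X k ω)

/-- Mutation / Insertion / Deletion symbols. -/
inductive MID | M | I | D
deriving DecidableEq

instance : MeasurableSpace MID := ⊤

namespace Stmt12Aux

/-- "good" position: the symbol is M or D. -/
def gp (z : ℤ → MID) (i : ℤ) : Prop := z i = MID.M ∨ z i = MID.D

instance (z : ℤ → MID) (i : ℤ) : Decidable (gp z i) := by unfold gp; infer_instance

/-- indicator of a good position -/
def e (z : ℤ → MID) (i : ℤ) : ℤ := if gp z i then 1 else 0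

/-- signed count of good positions in (0, m] (resp. minus count in (m, 0]). -/
noncomputable def C (z : ℤ → MID) (m : ℤ) : ℤ :=
  (∑ i ∈ Finset.Ioc 0 m, e z i) - ∑ i ∈ Finset.Ioc m 0, e z i

lemma Ioc_succ (a b : ℤ) (h : a ≤ b) :
    Finset.Ioc a (b + 1) = insert (b + 1) (Finset.Ioc a b) := by
  ext i
  simp only [Finset.mem_Ioc, Finset.mem_insert]
  omega

lemma sum_Ioc_succ (f : ℤ → ℤ) {a b : ℤ} (h : a ≤ b) :
    ∑ i ∈ Finset.Ioc a (b + 1), f i = (∑ i ∈ Finset.Ioc a b, f i) + f (b + 1) := by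
  rw [Ioc_succ a b h, Finset.sum_insert (by simp [Finset.mem_Ioc])]
  ring

lemma C_zero (z : ℤ → MID) : C z 0 = 0 := by simp [C]

lemma C_step (z : ℤ → MID) (m : ℤ) : C z (m + 1) = C z m + e z (m + 1) := by
  rcases le_or_gt 0 m with h | h
  · have h1 : Finset.Ioc m 0 = ∅ := Finset.Ioc_eq_empty (by omega)
    have h2 : Finset.Ioc (m + 1) 0 = ∅ := Finset.Ioc_eq_empty (by omega)
    rw [C, C, h1, h2, sum_Ioc_succ _ h]
    ring
  · have h1 : Finset.Ioc 0 (m + 1) = ∅ := Finset.Ioc_eq_empty (by omega)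
    have h2 : Finset.Ioc 0 m = ∅ := Finset.Ioc_eq_empty (by omega)
    have h3 : Finset.Ioc m 0 = insert (m + 1) (Finset.Ioc (m + 1) 0) := by
      ext i
      simp only [Finset.mem_Ioc, Finset.mem_insert]
      omega
    rw [C, C, h1, h2, h3, Finset.sum_insert (by simp [Finset.mem_Ioc])]
    ring

lemma C_diff (z : ℤ → MID) {a b : ℤ} (h : a ≤ b) :
    C z b = C z a + ∑ i ∈ Finset.Ioc a b, e z i := by
  refine Int.le_induction (motive := fun b _ => C z b = C z a + ∑ i ∈ Finset.Ioc a b, e z i)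
    ?_ ?_ b h
  · simp
  · intro b hb ih
    rw [C_step, ih, sum_Ioc_succ _ hb]
    ring

/-- shift of the symbol sequence -/
def shiftZ (j : ℤ) (z : ℤ → MID) : ℤ → MID := fun i => z (i + j)

/-- shift of the real sequence -/
def shiftX (m : ℤ) (x : ℤ → ℝ) : ℤ → ℝ := fun i => x (i + m)

lemma C_cocycle (z : ℤ → MID) (j k : ℤ) : C z (k + j) = C z j + C (shiftZ j z) k := by
  induction k using Int.induction_on with
  | zero => simp [C_zero]
  | succ k ih =>
      have h1 : (k : ℤ) + 1 + j = (k + j) + 1 := by ring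
      rw [h1, C_step, ih, C_step]
      have h2 : e (shiftZ j z) (k + 1) = e z (k + j + 1) := by
        have : (k : ℤ) + 1 + j = k + j + 1 := by ring
        simp only [e, gp, shiftZ, this]
      rw [h2]; ring
  | pred k ih =>
      have h1 := C_step z (-(k : ℤ) - 1 + j)
      have h2 : -(k : ℤ) - 1 + j + 1 = -k + j := by ring
      rw [h2] at h1
      have h3 := C_step (shiftZ j z) (-(k : ℤ) - 1)
      have h4 : -(k : ℤ) - 1 + 1 = -k := by ring
      rw [h4] at h3
      have h5 : e (shiftZ j z) (-(k : ℤ)) = e z (-k + j) := by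
        simp only [e, gp, shiftZ]
        rfl
      rw [h5] at h3
      omega

/-- the placement function -/
noncomputable def xbarF (z : ℤ → MID) (x : ℤ → ℝ) (k : ℤ) : ℝ := if gp z k then x (C z k) else 0

lemma xbarF_shift (z : ℤ → MID) (x : ℤ → ℝ) (j k : ℤ) :
    xbarF (shiftZ j z) (shiftX (C z j) x) k = xbarF z x (k + j) := by
  have hg : gp (shiftZ j z) k ↔ gp z (k + j) := Iff.rfl
  unfold xbarF
  by_cases h : gp (shiftZ j z) k
  · rw [if_pos h, if_pos (hg.mp h)]
    show x (C (shiftZ j z) k + C z j) = x (C z (k + j))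
    rw [C_cocycle z j k, add_comm]
  · rw [if_neg h, if_neg (fun hh => h (hg.mpr hh))]

lemma C_zeta (z : ℤ → MID) (ζ : ℤ → ℤ) (hmono : StrictMono ζ)
    (h00 : ζ 0 ≤ 0) (h01 : 0 < ζ 1)
    (hr : ∀ j, gp z j ↔ ∃ k, ζ k = j) : ∀ k, C z (ζ k) = k := by
  have base : C z (ζ 0) = 0 := by
    have hd := C_diff z h00
    have hsum : ∑ i ∈ Finset.Ioc (ζ 0) 0, e z i = 0 := by
      apply Finset.sum_eq_zero
      intro i hi
      simp only [Finset.mem_Ioc] at hi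
      unfold e
      rw [if_neg]
      intro hgp
      obtain ⟨m, hm⟩ := (hr i).mp hgp
      have hm0 : 0 < m := hmono.lt_iff_lt.mp (by omega : ζ 0 < ζ m)
      have hm1 : m < 1 := hmono.lt_iff_lt.mp (by omega : ζ m < ζ 1)
      omega
    rw [hsum, C_zero] at hd
    omega
  have step : ∀ k : ℤ, C z (ζ (k + 1)) = C z (ζ k) + 1 := by
    intro k
    have hlt : ζ k < ζ (k + 1) := hmono (by omega)
    have hd := C_diff z hlt.le
    have hsum : ∑ i ∈ Finset.Ioc (ζ k) (ζ (k + 1)), e z i = 1 := by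
      rw [Finset.sum_eq_single_of_mem (ζ (k + 1))
        (by simp only [Finset.mem_Ioc]; omega)]
      · unfold e
        rw [if_pos ((hr (ζ (k + 1))).mpr ⟨k + 1, rfl⟩)]
      · intro i hi hne
        simp only [Finset.mem_Ioc] at hi
        unfold e
        rw [if_neg]
        intro hgp
        obtain ⟨m, hm⟩ := (hr i).mp hgp
        have hm0 : k < m := hmono.lt_iff_lt.mp (by omega : ζ k < ζ m)
        have hm1 : m ≤ k + 1 := hmono.le_iff_le.mp (by omega : ζ m ≤ ζ (k + 1))
        have : m = k + 1 := by omega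
        subst this
        exact hne hm.symm
    omega
  intro k
  induction k using Int.induction_on with
  | zero => exact base
  | succ k ih => rw [step k, ih]
  | pred k ih =>
      have := step (-(k : ℤ) - 1)
      have h4 : -(k : ℤ) - 1 + 1 = -k := by ring
      rw [h4] at this
      omega

/-- every function out of MID is measurable -/
lemma measurable_of_MID {β : Type*} [MeasurableSpace β] (f : MID → β) : Measurable f :=
  fun _ _ => trivial

lemma measurable_e (i : ℤ) : Measurable fun z : ℤ → MID => e z i := by
  have : (fun z : ℤ → MID => e z i)
      = (fun s : MID => if s = MID.M ∨ s = MID.D then (1 : ℤ) else 0) ∘ fun z => z i := rfl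
  rw [this]
  exact (measurable_of_MID _).comp (measurable_pi_apply i)

lemma measurable_C (j : ℤ) : Measurable fun z : ℤ → MID => C z j := by
  unfold C
  exact (Finset.measurable_sum _ fun i _ => measurable_e i).sub
    (Finset.measurable_sum _ fun i _ => measurable_e i)

lemma measurable_evalInt : Measurable fun q : (ℤ → ℝ) × ℤ => q.1 q.2 :=
  measurable_from_prod_countable_left fun m => measurable_pi_apply m

lemma measurable_shiftZ (j : ℤ) : Measurable (shiftZ j) :=
  measurable_pi_lambda _ fun i => measurable_pi_apply (i + j)

lemma measurable_shiftX (m : ℤ) : Measurable (shiftX m) :=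
  measurable_pi_lambda _ fun i => measurable_pi_apply (i + m)

/-- the map building the pair sequence out of (z, x) -/
noncomputable def Phi (p : (ℤ → MID) × (ℤ → ℝ)) : ℤ → MID × ℝ := fun k => (p.1 k, xbarF p.1 p.2 k)

/-- the random shift on pairs -/
noncomputable def Psi (j : ℤ) (p : (ℤ → MID) × (ℤ → ℝ)) : (ℤ → MID) × (ℤ → ℝ) :=
  (shiftZ j p.1, shiftX (C p.1 j) p.2)

lemma measurable_gp_set (k : ℤ) : MeasurableSet {p : (ℤ → MID) × (ℤ → ℝ) | gp p.1 k} := by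
  have : {p : (ℤ → MID) × (ℤ → ℝ) | gp p.1 k}
      = (fun p : (ℤ → MID) × (ℤ → ℝ) => p.1 k) ⁻¹' {s | s = MID.M ∨ s = MID.D} := rfl
  rw [this]
  exact ((measurable_pi_apply k).comp measurable_fst) trivial

lemma measurable_Phi : Measurable Phi := by
  apply measurable_pi_lambda
  intro k
  apply Measurable.prodMk
  · exact (measurable_pi_apply k).comp measurable_fst
  · unfold xbarF
    apply Measurable.ite (measurable_gp_set k)
    · have : (fun p : (ℤ → MID) × (ℤ → ℝ) => p.2 (C p.1 k))
          = (fun q : (ℤ → ℝ) × ℤ => q.1 q.2) ∘ fun p => (p.2, C p.1 k) := rfl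
      rw [this]
      exact measurable_evalInt.comp
        (measurable_snd.prodMk ((measurable_C k).comp measurable_fst))
    · exact measurable_const

lemma measurable_Psi (j : ℤ) : Measurable (Psi j) := by
  apply Measurable.prodMk
  · exact (measurable_shiftZ j).comp measurable_fst
  · apply measurable_pi_lambda
    intro i
    have : (fun p : (ℤ → MID) × (ℤ → ℝ) => shiftX (C p.1 j) p.2 i)
        = (fun q : (ℤ → ℝ) × ℤ => q.1 q.2) ∘ fun p => (p.2, i + C p.1 j) := by
      funext p
      simp [shiftX, add_comm]
    rw [this]
    exact measurable_evalInt.comp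
      (measurable_snd.prodMk (measurable_const.add ((measurable_C j).comp measurable_fst)))

end Stmt12Aux

open Stmt12Aux in

/-- Lemma 4.1: ((Z_k, X̄_k), k ∈ ℤ) is strictly stationary under P. -/
theorem stmt12 {Ω : Type*} {mΩ : MeasurableSpace Ω} (P : Measure Ω) [IsProbabilityMeasure P]
    (X : ℤ → Ω → ℝ) (hmX : ∀ k, Measurable (X k)) (hXpos : ∀ k ω, 0 < X k ω)
    (hXstat : IsStationarySeq P X)
    (Z : ℤ → Ω → MID) (hmZ : ∀ k, Measurable (Z k)) (hZstat : IsStationarySeq P Z)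
    (hZerg : Ergodic (fun f : ℤ → MID => fun k => f (k + 1))
      (P.map (fun ω (k : ℤ) => Z k ω)))
    (hZpos : ∀ s : MID, P {ω | Z 0 ω = s} ≠ 0)
    (hinf : ∀ ω (s : MID) (n : ℤ), (∃ k > n, Z k ω = s) ∧ (∃ k < n, Z k ω = s))
    (hindep : IndepFun (fun ω (k : ℤ) => X k ω) (fun ω (k : ℤ) => Z k ω) P)
    (ζ : ℤ → Ω → ℤ) (hζmono : ∀ ω, StrictMono (ζ · ω))
    (hζ0 : ∀ ω, ζ 0 ω ≤ 0 ∧ 0 < ζ 1 ω)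
    (hζrange : ∀ ω j, (Z j ω = MID.M ∨ Z j ω = MID.D) ↔ ∃ k, ζ k ω = j)
    (Xbar : ℤ → Ω → ℝ)
    (hXbar1 : ∀ ω k, Xbar (ζ k ω) ω = X k ω)
    (hXbar2 : ∀ ω j, (∀ k, ζ k ω ≠ j) → Xbar j ω = 0) :
    IsStationarySeq P (fun k ω => (Z k ω, Xbar k ω)) := by
  classical
  intro j
  set Xp : Ω → ℤ → ℝ := fun ω k => X k ω with hXpdef
  set Zp : Ω → ℤ → MID := fun ω k => Z k ω with hZpdef
  have hmXp : Measurable Xp := measurable_pi_lambda _ hmX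
  have hmZp : Measurable Zp := measurable_pi_lambda _ hmZ
  -- pointwise identification of Xbar
  have hCz : ∀ ω k, C (Zp ω) (ζ k ω) = k := by
    intro ω
    exact C_zeta (Zp ω) (fun k => ζ k ω) (hζmono ω) (hζ0 ω).1 (hζ0 ω).2
      (fun j' => hζrange ω j')
  have hXbar_eq : ∀ ω k, Xbar k ω = xbarF (Zp ω) (Xp ω) k := by
    intro ω k
    by_cases h : gp (Zp ω) k
    · obtain ⟨m, hm⟩ := (hζrange ω k).mp h
      have hC : C (Zp ω) k = m := by rw [← hm]; exact hCz ω m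
      unfold xbarF
      rw [if_pos h, hC, ← hm, hXbar1 ω m]
    · have h2 : Xbar k ω = 0 := by
        apply hXbar2 ω k
        intro m hm
        exact h ((hζrange ω k).mpr ⟨m, hm⟩)
      unfold xbarF
      rw [if_neg h, h2]
  -- the pair random variable and the functional identities
  set pairRV : Ω → (ℤ → MID) × (ℤ → ℝ) := fun ω => (Zp ω, Xp ω) with hpairdef
  have hmpair : Measurable pairRV := hmZp.prodMk hmXp
  have hfun0 : (fun ω => fun k : ℤ => ((Z k ω, Xbar k ω) : MID × ℝ)) = Phi ∘ pairRV := by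
    funext ω
    funext k
    simp only [Function.comp_apply, Phi, hXbar_eq ω k]
    rfl
  have hfunj : (fun ω => fun k : ℤ => ((Z (k + j) ω, Xbar (k + j) ω) : MID × ℝ))
      = Phi ∘ (Psi j) ∘ pairRV := by
    funext ω
    funext k
    simp only [Function.comp_apply, Phi, Psi]
    rw [xbarF_shift (Zp ω) (Xp ω) j k, hXbar_eq ω (k + j)]
    rfl
  -- laws
  set κ : Measure (ℤ → MID) := P.map Zp with hκdef
  set ν : Measure (ℤ → ℝ) := P.map Xp with hνdef
  have hκprob : IsProbabilityMeasure κ := Measure.isProbabilityMeasure_map hmZp.aemeasurable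
  have hνprob : IsProbabilityMeasure ν := Measure.isProbabilityMeasure_map hmXp.aemeasurable
  have hprod : P.map pairRV = κ.prod ν :=
    (indepFun_iff_map_prod_eq_prod_map_map hmZp.aemeasurable hmXp.aemeasurable).mp hindep.symm
  -- invariance of the laws under shifts
  have hκinv : κ.map (shiftZ j) = κ := by
    rw [hκdef, Measure.map_map (measurable_shiftZ j) hmZp]
    have : shiftZ j ∘ Zp = fun ω => fun k : ℤ => Z (k + j) ω := rfl
    rw [this]
    exact hZstat j
  have hνinv : ∀ m : ℤ, ν.map (shiftX m) = ν := by
    intro m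
    rw [hνdef, Measure.map_map (measurable_shiftX m) hmXp]
    have : shiftX m ∘ Xp = fun ω => fun k : ℤ => X (k + m) ω := rfl
    rw [this]
    exact hXstat m
  -- invariance of the product law under Psi j
  have hmain : (κ.prod ν).map (Psi j) = κ.prod ν := by
    ext A hA
    rw [Measure.map_apply (measurable_Psi j) hA, Measure.prod_apply ((measurable_Psi j) hA),
      Measure.prod_apply hA]
    have hslice : ∀ z : ℤ → MID,
        ν (Prod.mk z ⁻¹' (Psi j ⁻¹' A)) = ν (Prod.mk (shiftZ j z) ⁻¹' A) := by
      intro z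
      have h1 : Prod.mk z ⁻¹' (Psi j ⁻¹' A)
          = (shiftX (C z j)) ⁻¹' (Prod.mk (shiftZ j z) ⁻¹' A) := rfl
      rw [h1, ← Measure.map_apply (measurable_shiftX (C z j)) (measurable_prodMk_left hA),
        hνinv (C z j)]
    simp_rw [hslice]
    have hf : Measurable fun z : ℤ → MID => ν (Prod.mk z ⁻¹' A) :=
      measurable_measure_prodMk_left hA
    rw [← lintegral_map hf (measurable_shiftZ j), hκinv]
  -- conclusion
  rw [hfun0, hfunj, ← Measure.map_map measurable_Phi ((measurable_Psi j).comp hmpair),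
    ← Measure.map_map (measurable_Psi j) hmpair, hprod, hmain,
    ← Measure.map_map measurable_Phi hmpair, hprod]
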